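/- Fix N ∈ ℕ, 0 ≤ ℓ ≤ N, and natural numbers n_1,...,n_N. Suppose that in the case N even with ℓ = N/2 the multisets {n_1,...,n_ℓ} and {n_{ℓ+1},...,n_N} are different; in all other cases (N odd, or N even with ℓ ≠ N/2) no extra assumption is made. For k ≥ 1 define a_k := ∑_{j=1}^ℓ ⟨n_j⟩^{-(2k+1)} − ∑_{j=ℓ+1}^N ⟨n_j⟩^{-(2k+1)}, where ⟨n⟩ = √(1+n²). Then there exists k with 1 ≤ k ≤ N such that a_k ≠ 0. -/

import Mathlib

/-- Japanese bracket `⟨x⟩ = √(1+x²)`. -/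
noncomputable def jap (x : ℝ) : ℝ := Real.sqrt (1 + x ^ 2)

lemma jap_pos (x : ℝ) : 0 < jap x := Real.sqrt_pos.mpr (by positivity)

lemma jap_sq (x : ℝ) : jap x ^ 2 = 1 + x ^ 2 := Real.sq_sqrt (by positivity)

lemma inv_jap_pow (m : ℕ) (k : ℕ) :
    1 / jap m ^ (2 * k + 1) = (1 / jap m) * (1 / (1 + (m : ℝ) ^ 2)) ^ k := by
  have h1 : jap (m : ℝ) ^ (2 * k + 1) = (1 + (m : ℝ) ^ 2) ^ k * jap m := by
    rw [pow_succ, pow_mul, jap_sq]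
  rw [h1, one_div_pow, one_div, one_div, one_div, mul_inv]
  ring

lemma xval_inj : Function.Injective (fun m : ℕ => 1 / (1 + (m : ℝ) ^ 2)) := by
  intro a b h
  simp only [one_div] at h
  have h2 : (1 : ℝ) + (a : ℝ) ^ 2 = 1 + (b : ℝ) ^ 2 := inv_injective h
  have h3 : (a : ℝ) = b := by nlinarith [sq_nonneg ((a:ℝ) + b), (Nat.cast_nonneg a : (0:ℝ) ≤ a), (Nat.cast_nonneg b : (0:ℝ) ≤ b)]
  exact_mod_cast h3

/-- Fix `N`, `0 ≤ ℓ ≤ N` and naturals `n_1, …, n_N`; assume that in the case `2ℓ = N`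
the multisets `{n_1,…,n_ℓ}` and `{n_{ℓ+1},…,n_N}` are different.  Then for
`a_k := ∑_{j=1}^ℓ ⟨n_j⟩^{-(2k+1)} − ∑_{j=ℓ+1}^N ⟨n_j⟩^{-(2k+1)}` there exists
`1 ≤ k ≤ N` with `a_k ≠ 0`. -/
theorem exists_nonzero_coefficient (N ℓ : ℕ) (hℓ : ℓ ≤ N) (n : ℕ → ℕ)
    (hmult : 2 * ℓ = N →
      Multiset.map n (Finset.Icc 1 ℓ).val ≠ Multiset.map n (Finset.Icc (ℓ + 1) N).val) :
    ∃ k : ℕ, 1 ≤ k ∧ k ≤ N ∧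
      (∑ j ∈ Finset.Icc 1 ℓ, 1 / jap (n j) ^ (2 * k + 1))
        - ∑ j ∈ Finset.Icc (ℓ + 1) N, 1 / jap (n j) ^ (2 * k + 1) ≠ 0 := by
  classical
  by_contra hcon
  push_neg at hcon
  set A : Finset ℕ := Finset.Icc 1 ℓ with hA
  set B : Finset ℕ := Finset.Icc (ℓ + 1) N with hB
  set V : Finset ℕ := A.image n ∪ B.image n with hV
  set c : ℕ → ℤ := fun m =>
    ((A.filter fun j => n j = m).card : ℤ) - ((B.filter fun j => n j = m).card : ℤ) with hc
  -- rewrite each sum fiberwise over V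
  have key : ∀ (s : Finset ℕ) (k : ℕ), s.image n ⊆ V →
      ∑ j ∈ s, 1 / jap (n j) ^ (2 * k + 1)
        = ∑ m ∈ V, ((s.filter fun j => n j = m).card : ℝ)
            * ((1 / jap m) * (1 / (1 + (m : ℝ) ^ 2)) ^ k) := by
    intro s k hs
    rw [Finset.sum_comp (fun m : ℕ => 1 / jap (m : ℝ) ^ (2 * k + 1)) n]
    rw [← Finset.sum_subset hs (by
      intro m _ hnm
      have hemp : (s.filter fun j => n j = m) = ∅ := by
        rw [Finset.filter_eq_empty_iff]
        intro j hj hj'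
        exact hnm (Finset.mem_image.mpr ⟨j, hj, hj'⟩)
      rw [hemp]
      simp)]
    refine Finset.sum_congr rfl fun m _ => ?_
    rw [nsmul_eq_mul, inv_jap_pow]
  have hAV : A.image n ⊆ V := Finset.subset_union_left
  have hBV : B.image n ⊆ V := Finset.subset_union_right
  have akey : ∀ k : ℕ,
      (∑ j ∈ A, 1 / jap (n j) ^ (2 * k + 1)) - ∑ j ∈ B, 1 / jap (n j) ^ (2 * k + 1)
        = ∑ m ∈ V, (c m : ℝ) * ((1 / jap m) * (1 / (1 + (m : ℝ) ^ 2)) ^ k) := by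
    intro k
    rw [key A k hAV, key B k hBV, ← Finset.sum_sub_distrib]
    refine Finset.sum_congr rfl fun m _ => ?_
    simp only [hc]
    push_cast
    ring
  -- cardinalities
  have hcardA : A.card = ℓ := by simp [hA]
  have hcardB : B.card = N - ℓ := by simp [hB]
  -- there is some m₀ ∈ V with c m₀ ≠ 0
  have hne : ∃ m₀ ∈ V, c m₀ ≠ 0 := by
    by_contra hz
    push_neg at hz
    rcases eq_or_ne (2 * ℓ) N with hN | hN
    · refine hmult hN ?_
      ext m
      have hcnt : ∀ s : Finset ℕ, Multiset.count m (Multiset.map n s.val)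
          = (s.filter fun j => n j = m).card := by
        intro s
        rw [Multiset.count_map]
        rw [Finset.card_def, Finset.filter_val]
        exact congrArg Multiset.card (Multiset.filter_congr (fun x _ => eq_comm))
      rw [hcnt A, hcnt B]
      by_cases hm : m ∈ V
      · have := hz m hm
        simp only [hc] at this
        omega
      · have h1 : (A.filter fun j => n j = m) = ∅ := by
          rw [Finset.filter_eq_empty_iff]
          intro j hj hj'
          exact hm (hAV (Finset.mem_image.mpr ⟨j, hj, hj'⟩))
        have h2 : (B.filter fun j => n j = m) = ∅ := by
          rw [Finset.filter_eq_empty_iff]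
          intro j hj hj'
          exact hm (hBV (Finset.mem_image.mpr ⟨j, hj, hj'⟩))
        rw [h1, h2]
    · -- sum of counts
      have h1 : ∑ m ∈ V, (A.filter fun j => n j = m).card = A.card :=
        (Finset.card_eq_sum_card_fiberwise fun j hj =>
          hAV (Finset.mem_image.mpr ⟨j, hj, rfl⟩)).symm
      have h2 : ∑ m ∈ V, (B.filter fun j => n j = m).card = B.card :=
        (Finset.card_eq_sum_card_fiberwise fun j hj =>
          hBV (Finset.mem_image.mpr ⟨j, hj, rfl⟩)).symm
      have h3 : ∑ m ∈ V, c m = (A.card : ℤ) - B.card := by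
        simp only [hc]
        rw [Finset.sum_sub_distrib]
        rw [← Nat.cast_sum, ← Nat.cast_sum, h1, h2]
      have h4 : ∑ m ∈ V, c m = 0 := Finset.sum_eq_zero hz
      rw [h4, hcardA, hcardB] at h3
      omega
  obtain ⟨m₀, hm₀V, hm₀⟩ := hne
  -- Vandermonde part
  have hqN : V.card ≤ N := by
    calc V.card ≤ (A.image n).card + (B.image n).card := Finset.card_union_le _ _
    _ ≤ A.card + B.card := Nat.add_le_add (Finset.card_image_le) (Finset.card_image_le)
    _ = N := by rw [hcardA, hcardB]; omega
  set q := V.card with hq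
  let e : Fin q ≃ {x // x ∈ V} := V.equivFin.symm
  set F : Fin q → ℝ := fun i => 1 / (1 + ((e i : ℕ) : ℝ) ^ 2) with hF
  set w : Fin q → ℝ := fun i =>
    (c (e i) : ℝ) * (1 / jap ((e i : ℕ) : ℝ)) * F i with hw
  have hFinj : Function.Injective F := by
    intro a b hab
    have : ((e a : ℕ)) = ((e b : ℕ)) := xval_inj hab
    exact e.injective (Subtype.coe_injective this)
  have hsum : ∀ i' : Fin q, ∑ i : Fin q, w i * F i ^ (i' : ℕ) = 0 := by
    intro i'
    have hk1 : 1 ≤ (i' : ℕ) + 1 := Nat.le_add_left 1 _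
    have hk2 : (i' : ℕ) + 1 ≤ N := by
      have := i'.isLt
      omega
    have h0 := hcon ((i' : ℕ) + 1) hk1 hk2
    rw [akey ((i' : ℕ) + 1)] at h0
    rw [← h0]
    have hsum2 : ∑ m ∈ V, (c m : ℝ) * ((1 / jap m) * (1 / (1 + (m : ℝ) ^ 2)) ^ ((i' : ℕ) + 1))
        = ∑ a : {x // x ∈ V}, (c a : ℝ)
            * ((1 / jap ((a : ℕ) : ℝ)) * (1 / (1 + ((a : ℕ) : ℝ) ^ 2)) ^ ((i' : ℕ) + 1)) := by
      exact (Finset.sum_coe_sort V (fun m => (c m : ℝ)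
        * ((1 / jap m) * (1 / (1 + (m : ℝ) ^ 2)) ^ ((i' : ℕ) + 1)))).symm
    rw [hsum2, ← Equiv.sum_comp e]
    refine Finset.sum_congr rfl fun i _ => ?_
    simp only [hw, hF]
    ring
  have hwzero := Matrix.eq_zero_of_forall_pow_sum_mul_pow_eq_zero hFinj hsum
  have hi0 : w (e.symm ⟨m₀, hm₀V⟩) = 0 := by rw [hwzero]; rfl
  simp only [hw, hF, Equiv.apply_symm_apply] at hi0
  have hjp : (0:ℝ) < jap ((m₀ : ℕ) : ℝ) := jap_pos _
  have hxp : (0:ℝ) < 1 / (1 + ((m₀ : ℕ) : ℝ) ^ 2) := by positivity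
  have hcne : ((c m₀ : ℤ) : ℝ) ≠ 0 := Int.cast_ne_zero.mpr hm₀
  have : ((c m₀ : ℤ) : ℝ) * (1 / jap ((m₀ : ℕ) : ℝ)) * (1 / (1 + ((m₀ : ℕ) : ℝ) ^ 2)) ≠ 0 := by
    have h1 : (1:ℝ) / jap ((m₀ : ℕ) : ℝ) ≠ 0 := by positivity
    exact mul_ne_zero (mul_ne_zero hcne h1) (ne_of_gt hxp)
  exact this hi0
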